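/- Let p : ℕ → ℝ be nonnegative with ∑'_{k} p k = 1, and let c₁, c₂ > 0 be constants such that c₁ · k^(−3/2) ≤ p k ≤ c₂ · k^(−3/2) for every k ≥ 1. Let ε be a real with 0 < ε ≤ 1 and let n ≥ 1 be an integer with ε · n ≥ 1. Then (∑'_{k} min(k, 2n) · p k) / (∑_{k : ℕ, k ≥ 1, n(1−ε) ≤ k ≤ n(1+ε)} p k) ≤ (16 · c₂ / c₁) · n / ε. -/

import Mathlib

lemma aux_rpow (x : ℝ) (hx : 0 ≤ x) :
    x ^ (-(3/2) : ℝ) = ((Real.sqrt x) ^ 3)⁻¹ := by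
  rw [Real.sqrt_eq_rpow, ← Real.rpow_natCast (x ^ ((1:ℝ)/2)) 3, ← Real.rpow_mul hx,
    ← Real.rpow_neg hx]
  norm_num

lemma aux1 (a : ℝ) (ha : 1 ≤ a) :
    (Real.sqrt a)⁻¹ ≤ 2 * (Real.sqrt a - Real.sqrt (a - 1)) := by
  have h0 : (0:ℝ) ≤ a - 1 := by linarith
  have hb := Real.sq_sqrt h0
  have hasq := Real.sq_sqrt (by linarith : (0:ℝ) ≤ a)
  have hbn := Real.sqrt_nonneg (a-1)
  have han : 1 ≤ Real.sqrt a := by nlinarith [Real.sqrt_nonneg a]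
  rw [inv_le_iff_one_le_mul₀ (by linarith)]
  nlinarith [sq_nonneg (Real.sqrt a - Real.sqrt (a-1))]

lemma aux2 (a : ℝ) (ha : 1 ≤ a) :
    ((Real.sqrt (a + 1)) ^ 3)⁻¹ ≤ 2 * ((Real.sqrt a)⁻¹ - (Real.sqrt (a + 1))⁻¹) := by
  have hb := Real.sq_sqrt (by linarith : (0:ℝ) ≤ a)
  have hasq := Real.sq_sqrt (by linarith : (0:ℝ) ≤ a + 1)
  have hbn : 1 ≤ Real.sqrt a := by nlinarith [Real.sqrt_nonneg a]
  have han : 1 ≤ Real.sqrt (a+1) := by nlinarith [Real.sqrt_nonneg (a+1)]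
  have hle : Real.sqrt a ≤ Real.sqrt (a+1) := Real.sqrt_le_sqrt (by linarith)
  set s := Real.sqrt a
  set t := Real.sqrt (a+1)
  have hs : (0:ℝ) < s := by linarith
  have ht : (0:ℝ) < t := by linarith
  rw [inv_le_iff_one_le_mul₀ (by positivity)]
  have h2 : (t - s) * (t + s) = 1 := by nlinarith
  have key : s ≤ 2*(t-s)*t^2 := by nlinarith
  have hexp : 2 * (s⁻¹ - t⁻¹) * t^3 = 2*(t-s)*t^2/s := by field_simp
  rw [hexp, le_div_iff₀ hs, one_mul]
  exact key

set_option maxHeartbeats 2000000 in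
/-- Quantitative approximate-size sampling (Duchon et al.): with
`c₁ k^{-3/2} ≤ p k ≤ c₂ k^{-3/2}`, the expected total cost of the
approximate-size rejection sampler with tolerance `ε`, namely the expected
cost of one attempt (aborted above size `2n`) divided by the probability of
landing in the window `[n(1-ε), n(1+ε)]`, is at most `(16 c₂ / c₁) n / ε`. -/
theorem stmt_14 (p : ℕ → ℝ) (hnn : ∀ k, 0 ≤ p k) (hsum : ∑' k, p k = 1)
    (c₁ c₂ : ℝ) (hc₁ : 0 < c₁) (hc₂ : 0 < c₂)
    (hbounds : ∀ k : ℕ, 1 ≤ k →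
      c₁ * (k : ℝ) ^ (-(3 / 2) : ℝ) ≤ p k ∧ p k ≤ c₂ * (k : ℝ) ^ (-(3 / 2) : ℝ))
    (ε : ℝ) (hε0 : 0 < ε) (hε1 : ε ≤ 1)
    (n : ℕ) (hn : 1 ≤ n) (hεn : 1 ≤ ε * n) :
    (∑' k : ℕ, ((min k (2 * n) : ℕ) : ℝ) * p k) /
        (∑' k : {k : ℕ // 1 ≤ k ∧ (n : ℝ) * (1 - ε) ≤ (k : ℝ) ∧ (k : ℝ) ≤ (n : ℝ) * (1 + ε)},
          p (k : ℕ))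
      ≤ (16 * c₂ / c₁) * (n : ℝ) / ε := by
  have hp : Summable p := by
    by_contra hcon
    rw [tsum_eq_zero_of_not_summable hcon] at hsum
    norm_num at hsum
  have hn1 : (1:ℝ) ≤ (n:ℝ) := by exact_mod_cast hn
  set s : ℕ → ℝ := fun k => Real.sqrt k with hs_def
  have hs2 : ∀ k : ℕ, (s k)^2 = (k:ℝ) := fun k => Real.sq_sqrt (Nat.cast_nonneg k)
  have hsnn : ∀ k : ℕ, 0 ≤ s k := fun k => Real.sqrt_nonneg _
  have hsmono : ∀ {a b : ℕ}, a ≤ b → s a ≤ s b := by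
    intro a b hab; exact Real.sqrt_le_sqrt (by exact_mod_cast hab)
  have hs1 : ∀ k : ℕ, 1 ≤ k → 1 ≤ s k := by
    intro k hk
    have h := hsmono hk
    simpa [hs_def] using h
  have hup : ∀ k : ℕ, 1 ≤ k → p k ≤ c₂ * ((s k)^3)⁻¹ := by
    intro k hk
    have h := (hbounds k hk).2
    rwa [aux_rpow _ (Nat.cast_nonneg k)] at h
  have hlo : ∀ k : ℕ, 1 ≤ k → c₁ * ((s k)^3)⁻¹ ≤ p k := by
    intro k hk
    have h := (hbounds k hk).1
    rwa [aux_rpow _ (Nat.cast_nonneg k)] at h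
  set f : ℕ → ℝ := fun k => ((min k (2*n) : ℕ) : ℝ) * p k with hf_def
  have hfnn : ∀ k, 0 ≤ f k := fun k => mul_nonneg (Nat.cast_nonneg _) (hnn k)
  set r : ℝ := s (2*n) with hr_def
  have hr2 : r^2 = 2*(n:ℝ) := by rw [hr_def, hs2]; push_cast; ring
  have hr1 : 1 ≤ r := hs1 _ (by omega)
  have hrpos : 0 < r := by linarith
  -- the telescoping majorant
  set H : ℕ → ℝ := fun j =>
      2*c₂ * s (min j (2*n)) + 4*(n:ℝ)*c₂ * (r⁻¹ - (s (max j (2*n)))⁻¹) with hH_def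
  have hstep : ∀ j : ℕ, f (j+1) ≤ H (j+1) - H j := by
    intro j
    rcases le_or_gt (j+1) (2*n) with hj | hj
    · have e1 : min (j+1) (2*n) = j+1 := min_eq_left hj
      have e2 : min j (2*n) = j := min_eq_left (by omega)
      have e3 : max (j+1) (2*n) = 2*n := max_eq_right hj
      have e4 : max j (2*n) = 2*n := max_eq_right (by omega)
      have hdif : H (j+1) - H j = 2*c₂ * (s (j+1) - s j) := by
        simp only [hH_def, e1, e2, e3, e4]; ring
      rw [hdif]
      have hky : (1:ℕ) ≤ j+1 := Nat.succ_le_succ (Nat.zero_le j)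
      have hf1 : f (j+1) = ((j+1:ℕ):ℝ) * p (j+1) := by simp only [hf_def]; rw [e1]
      have hpos : 0 < s (j+1) := lt_of_lt_of_le one_pos (hs1 _ hky)
      have h1 : ((j+1:ℕ):ℝ) * p (j+1) ≤ ((j+1:ℕ):ℝ) * (c₂ * ((s (j+1))^3)⁻¹) :=
        mul_le_mul_of_nonneg_left (hup _ hky) (by positivity)
      have h2 : ((j+1:ℕ):ℝ) * (c₂ * ((s (j+1))^3)⁻¹) = c₂ * (s (j+1))⁻¹ := by
        rw [← hs2 (j+1)]; field_simp
      have h3 : (s (j+1))⁻¹ ≤ 2 * (s (j+1) - s j) := by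
        have ha : (1:ℝ) ≤ ((j+1:ℕ):ℝ) := by exact_mod_cast hky
        have := aux1 ((j+1:ℕ):ℝ) ha
        have hcast : ((j+1:ℕ):ℝ) - 1 = (j:ℝ) := by push_cast; ring
        rw [hcast] at this
        simpa [hs_def] using this
      calc f (j+1) = ((j+1:ℕ):ℝ) * p (j+1) := hf1
        _ ≤ c₂ * (s (j+1))⁻¹ := by rw [← h2]; exact h1
        _ ≤ c₂ * (2 * (s (j+1) - s j)) := mul_le_mul_of_nonneg_left h3 hc₂.le
        _ = 2*c₂ * (s (j+1) - s j) := by ring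
    · have hj' : 2*n ≤ j := by omega
      have e1 : min (j+1) (2*n) = 2*n := min_eq_right (by omega)
      have e2 : min j (2*n) = 2*n := min_eq_right hj'
      have e3 : max (j+1) (2*n) = j+1 := max_eq_left (by omega)
      have e4 : max j (2*n) = j := max_eq_left hj'
      have hdif : H (j+1) - H j = 4*(n:ℝ)*c₂ * ((s j)⁻¹ - (s (j+1))⁻¹) := by
        simp only [hH_def, e1, e2, e3, e4]; ring
      rw [hdif]
      have hky : (1:ℕ) ≤ j+1 := Nat.succ_le_succ (Nat.zero_le j)
      have hf1 : f (j+1) = ((2*n:ℕ):ℝ) * p (j+1) := by simp only [hf_def]; rw [e1]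
      have h1 : ((2*n:ℕ):ℝ) * p (j+1) ≤ ((2*n:ℕ):ℝ) * (c₂ * ((s (j+1))^3)⁻¹) :=
        mul_le_mul_of_nonneg_left (hup _ hky) (by positivity)
      have h3 : ((s (j+1))^3)⁻¹ ≤ 2 * ((s j)⁻¹ - (s (j+1))⁻¹) := by
        have ha : (1:ℝ) ≤ (j:ℝ) := by
          have : 1 ≤ j := by omega
          exact_mod_cast this
        have := aux2 (j:ℝ) ha
        have hcast : ((j:ℝ) + 1) = ((j+1:ℕ):ℝ) := by push_cast [Nat.cast_add]; ring
        rw [hcast] at this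
        simpa [hs_def] using this
      calc f (j+1) = ((2*n:ℕ):ℝ) * p (j+1) := hf1
        _ ≤ ((2*n:ℕ):ℝ) * (c₂ * ((s (j+1))^3)⁻¹) := h1
        _ ≤ ((2*n:ℕ):ℝ) * (c₂ * (2 * ((s j)⁻¹ - (s (j+1))⁻¹))) := by
            apply mul_le_mul_of_nonneg_left _ (by positivity)
            exact mul_le_mul_of_nonneg_left h3 hc₂.le
        _ = 4*(n:ℝ)*c₂ * ((s j)⁻¹ - (s (j+1))⁻¹) := by push_cast; ring
  have hBnn : 0 ≤ 2*c₂*r + 4*(n:ℝ)*c₂*r⁻¹ := by positivity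
  have hnum : ∑' k, f k ≤ 2*c₂*r + 4*(n:ℝ)*c₂*r⁻¹ := by
    apply Real.tsum_le_of_sum_range_le hfnn
    intro m
    cases m with
    | zero => simpa using hBnn
    | succ m' =>
      rw [Finset.sum_range_succ']
      have hf0 : f 0 = 0 := by simp [hf_def]
      rw [hf0, add_zero]
      calc ∑ j ∈ Finset.range m', f (j+1)
          ≤ ∑ j ∈ Finset.range m', (H (j+1) - H j) :=
            Finset.sum_le_sum (fun j _ => hstep j)
        _ = H m' - H 0 := Finset.sum_range_sub H m'
        _ ≤ 2*c₂*r + 4*(n:ℝ)*c₂*r⁻¹ := by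
            have h0 : H 0 = 0 := by
              simp [hH_def, hr_def, hs_def]
            rw [h0, sub_zero]
            have t1 : s (min m' (2*n)) ≤ r := hsmono (min_le_right _ _)
            have t2 : 0 ≤ (s (max m' (2*n)))⁻¹ := by positivity
            have t3 : r⁻¹ - (s (max m' (2*n)))⁻¹ ≤ r⁻¹ := by linarith
            have t4 : 0 ≤ 4*(n:ℝ)*c₂ := by positivity
            simp only [hH_def]
            nlinarith [mul_le_mul_of_nonneg_left t3 t4]
  -- denominator
  set S : Set ℕ := {k | 1 ≤ k ∧ (n:ℝ)*(1-ε) ≤ (k:ℝ) ∧ (k:ℝ) ≤ (n:ℝ)*(1+ε)} with hS_def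
  set t := Nat.floor (ε * n) with ht_def
  have htle : (t:ℝ) ≤ ε * n := Nat.floor_le (by positivity)
  have htlt : ε * (n:ℝ) < t + 1 := Nat.lt_floor_add_one _
  have htn : t ≤ n := by
    have h : (t:ℝ) ≤ (n:ℝ) := le_trans htle (by nlinarith)
    exact_mod_cast h
  have hsub : ∀ k ∈ Finset.Icc n (n + t), k ∈ S := by
    intro k hk
    rw [Finset.mem_Icc] at hk
    refine ⟨le_trans hn hk.1, ?_, ?_⟩
    · have h : (n:ℝ) ≤ (k:ℝ) := by exact_mod_cast hk.1
      nlinarith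
    · have h : (k:ℝ) ≤ (n:ℝ) + (t:ℝ) := by exact_mod_cast hk.2
      nlinarith
  have hk2n : ∀ k ∈ Finset.Icc n (n+t), k ≤ 2*n := by
    intro k hk; rw [Finset.mem_Icc] at hk; omega
  have hind : Summable (S.indicator p) := hp.indicator S
  have hterm : ∀ k ∈ Finset.Icc n (n+t), c₁ * (r^3)⁻¹ ≤ S.indicator p k := by
    intro k hk
    rw [Set.indicator_of_mem (hsub k hk)]
    have h1 : 1 ≤ k := le_trans hn (Finset.mem_Icc.mp hk).1
    refine le_trans ?_ (hlo k h1)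
    have hsk : s k ≤ r := hsmono (hk2n k hk)
    have hskpos : 0 < s k := lt_of_lt_of_le one_pos (hs1 k h1)
    gcongr
  have hcard : (Finset.Icc n (n+t)).card = t + 1 := by
    rw [Nat.card_Icc]; omega
  have hden : ε * (n:ℝ) * (c₁ * (r^3)⁻¹)
      ≤ ∑' k : {k : ℕ // 1 ≤ k ∧ (n : ℝ) * (1 - ε) ≤ (k : ℝ) ∧ (k : ℝ) ≤ (n : ℝ) * (1 + ε)},
          p (k : ℕ) := by
    have heq : (∑' k : {k : ℕ // 1 ≤ k ∧ (n : ℝ) * (1 - ε) ≤ (k : ℝ) ∧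
          (k : ℝ) ≤ (n : ℝ) * (1 + ε)}, p (k : ℕ)) = ∑' k, S.indicator p k :=
      tsum_subtype S p
    rw [heq]
    have key : ∑ k ∈ Finset.Icc n (n+t), S.indicator p k ≤ ∑' k, S.indicator p k :=
      Summable.sum_le_tsum _ (fun k _ => Set.indicator_nonneg (fun a _ => hnn a) k) hind
    refine le_trans ?_ key
    have hsum' : ((t:ℝ)+1) * (c₁ * (r^3)⁻¹) ≤ ∑ k ∈ Finset.Icc n (n+t), S.indicator p k := by
      calc ((t:ℝ)+1) * (c₁ * (r^3)⁻¹)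
          = ∑ _k ∈ Finset.Icc n (n+t), c₁ * (r^3)⁻¹ := by
            rw [Finset.sum_const, hcard]; push_cast; ring
        _ ≤ _ := Finset.sum_le_sum hterm
    refine le_trans ?_ hsum'
    have : ε * (n:ℝ) ≤ (t:ℝ) + 1 := htlt.le
    have hpos : 0 ≤ c₁ * (r^3)⁻¹ := by positivity
    nlinarith
  have hDpos : 0 < ε * (n:ℝ) * (c₁ * (r^3)⁻¹) := by positivity
  refine le_trans (div_le_div₀ hBnn hnum hDpos hden) ?_
  have hrne : r ≠ 0 := ne_of_gt hrpos
  have hεne : ε ≠ 0 := ne_of_gt hε0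
  have hc₁ne : c₁ ≠ 0 := ne_of_gt hc₁
  have hnne : (n:ℝ) ≠ 0 := by positivity
  have hfin : (2*c₂*r + 4*(n:ℝ)*c₂*r⁻¹) / (ε * (n:ℝ) * (c₁ * (r^3)⁻¹))
      = (16 * c₂ / c₁) * (n : ℝ) / ε := by
    have hB : 2*c₂*r + 4*(n:ℝ)*c₂*r⁻¹ = 4*c₂*r := by
      field_simp
      linear_combination (-2)*hr2
    rw [hB]
    have hr4 : r^4 = 4*(n:ℝ)^2 := by rw [show r^4 = (r^2)^2 by ring, hr2]; ring
    field_simp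
    linear_combination 4*hr4
  exact le_of_eq hfin
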